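/- arXiv:2511.16799 — 2 statements merged into one kernel-verified Lean document; each statement's English description precedes it below -/
import Mathlib

section
/- For a strictly r-furcating rooted tree T with n leaves, the number of labeled histories equals ((n-1)/(r-1))! divided by the product over internal nodes v of (m(v)-1)/(r-1), where m(v) is the number of leaves descended from v. -/
set_option maxRecDepth 8000
set_option maxHeartbeats 1600000


inductive RTree : Type where
  | leaf : RTree
  | node : List RTree → RTree

namespace RTree

def leaves : RTree → ℕ
  | leaf => 1
  | node cs => (cs.attach.map fun c => leaves c.1).sum
decreasing_by simp only [node.sizeOf_spec]; have := List.sizeOf_lt_of_mem c.2; omega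

def wcount : RTree → ℕ
  | leaf => 0
  | node cs => 1 + (cs.attach.map fun c => wcount c.1).sum
decreasing_by simp only [node.sizeOf_spec]; have := List.sizeOf_lt_of_mem c.2; omega

def delta : RTree → ℕ
  | leaf => 0
  | node cs => 1 + (cs.attach.map fun c => delta c.1).foldr max 0
decreasing_by simp only [node.sizeOf_spec]; have := List.sizeOf_lt_of_mem c.2; omega

def prodW : RTree → ℕ
  | leaf => 1
  | node cs =>
      (1 + (cs.attach.map fun c => wcount c.1).sum) * (cs.attach.map fun c => prodW c.1).prod
decreasing_by simp only [node.sizeOf_spec]; have := List.sizeOf_lt_of_mem c.2; omega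

def subtreeAt : List ℕ → RTree → Option RTree
  | [], t => some t
  | _ :: _, leaf => none
  | i :: p, node cs => (cs[i]?).bind (fun c => subtreeAt p c)

def Internal (T : RTree) : Type := {p : List ℕ // ∃ cs, subtreeAt p T = some (node cs)}

def IsLabeledHistory (T : RTree) (f : Internal T → Fin (wcount T)) : Prop :=
  Function.Bijective f ∧ ∀ u v : Internal T, v.1 <+: u.1 → v.1 ≠ u.1 → f u < f v

noncomputable def N (T : RTree) : ℕ :=
  Nat.card {f : Internal T → Fin (wcount T) // IsLabeledHistory T f}

def IsTieHistory (T : RTree) (z : ℕ) (f : Internal T → Fin z) : Prop :=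
  Function.Surjective f ∧ ∀ u v : Internal T, v.1 <+: u.1 → v.1 ≠ u.1 → f u < f v

noncomputable def E (T : RTree) (z : ℕ) : ℕ :=
  Nat.card {f : Internal T → Fin z // IsTieHistory T z f}

noncomputable def NTie (T : RTree) : ℕ :=
  Nat.card ((z : ℕ) × {f : Internal T → Fin z // IsTieHistory T z f})

def replaceAt : List ℕ → RTree → RTree → RTree
  | [], _, s => s
  | _ :: _, leaf, _ => leaf
  | i :: p, node cs, s => node (cs.set i (replaceAt p (cs.getD i leaf) s))

end RTree

namespace RTree

/-- Product over internal nodes `v` of `(m(v)-1)/(r-1)`, where `m(v)` is the number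
of leaves descended from `v`. -/
def prodMr (r : ℕ) : RTree → ℕ
  | leaf => 1
  | node cs =>
      ((leaves (node cs) - 1) / (r - 1)) * (cs.attach.map fun c => prodMr r c.1).prod
decreasing_by simp only [node.sizeOf_spec]; have := List.sizeOf_lt_of_mem c.2; omega

-- ==================== auxiliary development ====================

def RP (pu pv : List ℕ) : Prop := pv <+: pu ∧ pv ≠ pu

def RI (T : RTree) (u v : Internal T) : Prop := RP u.1 v.1

def ROpt {A : Type*} (R : A → A → Prop) : Option A → Option A → Prop
  | some a, some b => R a b
  | some _, none => True
  | none, _ => False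

def RSum {A B : Type*} (RA : A → A → Prop) (RB : B → B → Prop) : A ⊕ B → A ⊕ B → Prop
  | .inl a, .inl b => RA a b
  | .inr a, .inr b => RB a b
  | _, _ => False

def LH (A : Type*) (R : A → A → Prop) (γ : Type*) [Preorder γ] : Type _ :=
  {f : A → γ // Function.Bijective f ∧ ∀ u v, R u v → f u < f v}

def LH.congrTarget {A γ δ : Type*} [Preorder γ] [Preorder δ] (R : A → A → Prop)
    (e : γ ≃o δ) : LH A R γ ≃ LH A R δ where
  toFun f := ⟨fun a => e (f.1 a), e.toEquiv.bijective.comp f.2.1,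
    fun u v h => e.lt_iff_lt.2 (f.2.2 u v h)⟩
  invFun f := ⟨fun a => e.symm (f.1 a), e.symm.toEquiv.bijective.comp f.2.1,
    fun u v h => e.symm.lt_iff_lt.2 (f.2.2 u v h)⟩
  left_inv f := by
    apply Subtype.ext; funext a
    exact e.symm_apply_apply _
  right_inv f := by
    apply Subtype.ext; funext a
    exact e.apply_symm_apply _

def LH.congrSource {A B γ : Type*} [Preorder γ] {R : A → A → Prop} {R' : B → B → Prop}
    (e : A ≃ B) (hR : ∀ u v : A, R u v ↔ R' (e u) (e v)) : LH A R γ ≃ LH B R' γ where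
  toFun f := ⟨fun b => f.1 (e.symm b), f.2.1.comp e.symm.bijective,
    fun u v h => f.2.2 _ _ (by rw [hR]; rw [e.apply_symm_apply, e.apply_symm_apply]; exact h)⟩
  invFun f := ⟨fun a => f.1 (e a), f.2.1.comp e.bijective,
    fun u v h => f.2.2 _ _ ((hR u v).1 h)⟩
  left_inv f := by
    apply Subtype.ext; funext a
    dsimp only
    rw [e.symm_apply_apply]
  right_inv f := by
    apply Subtype.ext; funext b
    dsimp only
    rw [e.apply_symm_apply]

lemma top_eq_last {A : Type*} {R : A → A → Prop} {m : ℕ} (f : Option A → Fin (m + 1))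
    (hbij : Function.Bijective f) (hcond : ∀ u v, ROpt R u v → f u < f v) :
    f none = Fin.last m := by
  obtain ⟨x, hx⟩ := hbij.2 (Fin.last m)
  match x with
  | none => exact hx
  | some a =>
      have h1 : f (some a) < f none := hcond (some a) none trivial
      rw [hx] at h1
      exact absurd (lt_of_lt_of_le h1 (Fin.le_last _)) (lt_irrefl _)

lemma val_lt_top {A : Type*} {R : A → A → Prop} {m : ℕ} (f : Option A → Fin (m + 1))
    (hbij : Function.Bijective f) (hcond : ∀ u v, ROpt R u v → f u < f v) (a : A) :
    (f (some a)).val < m := by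
  have h1 : f (some a) < f none := hcond (some a) none trivial
  have h2 := top_eq_last f hbij hcond
  rw [h2, Fin.lt_def, Fin.val_last] at h1
  exact h1

def LH.optionEquiv {A : Type*} {R : A → A → Prop} (m : ℕ) :
    LH (Option A) (ROpt R) (Fin (m + 1)) ≃ LH A R (Fin m) where
  toFun f :=
    ⟨fun a => ⟨(f.1 (some a)).val, val_lt_top f.1 f.2.1 f.2.2 a⟩, by
      refine ⟨⟨?_, ?_⟩, ?_⟩
      · intro x y h
        have h2 := congrArg Fin.val h
        dsimp only at h2
        exact Option.some_injective _ (f.2.1.1 (Fin.ext h2))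
      · intro y
        obtain ⟨x, hx⟩ := f.2.1.2 ⟨y.val, Nat.lt_succ_of_lt y.isLt⟩
        match x with
        | none =>
            exfalso
            have h1 := top_eq_last f.1 f.2.1 f.2.2
            rw [hx] at h1
            have h2 : y.val = m := congrArg Fin.val h1
            have := y.isLt
            omega
        | some a =>
            refine ⟨a, Fin.ext ?_⟩
            show (f.1 (some a)).val = y.val
            rw [hx]
      · intro u v h
        have h2 := f.2.2 (some u) (some v) h
        rw [Fin.lt_def] at h2
        exact h2⟩
  invFun g :=
    ⟨fun o => o.elim (Fin.last m) (fun a => Fin.castSucc (g.1 a)), by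
      refine ⟨⟨?_, ?_⟩, ?_⟩
      · intro x y h
        match x, y with
        | none, none => rfl
        | none, some b =>
            exfalso
            have h2 := congrArg Fin.val h
            simp only [Option.elim] at h2
            rw [Fin.val_last, Fin.coe_castSucc] at h2
            have := (g.1 b).isLt
            omega
        | some a, none =>
            exfalso
            have h2 := congrArg Fin.val h
            simp only [Option.elim] at h2
            rw [Fin.val_last, Fin.coe_castSucc] at h2
            have := (g.1 a).isLt
            omega
        | some a, some b =>
            have h2 := congrArg Fin.val h
            simp only [Option.elim] at h2
            rw [Fin.coe_castSucc, Fin.coe_castSucc] at h2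
            exact congrArg some (g.2.1.1 (Fin.ext h2))
      · intro y
        rcases Nat.lt_or_ge y.val m with hy | hy
        · obtain ⟨a, ha⟩ := g.2.1.2 ⟨y.val, hy⟩
          refine ⟨some a, Fin.ext ?_⟩
          show (g.1 a).val = y.val
          rw [ha]
        · refine ⟨none, Fin.ext ?_⟩
          show m = y.val
          have := y.isLt
          omega
      · intro u v h
        match u, v with
        | some a, some b =>
            have h2 := g.2.2 a b h
            rw [Fin.lt_def] at h2
            show Fin.castSucc (g.1 a) < Fin.castSucc (g.1 b)
            rw [Fin.lt_def]
            exact h2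
        | some a, none =>
            show Fin.castSucc (g.1 a) < Fin.last m
            exact Fin.castSucc_lt_last _
        | none, none => exact absurd h (by intro hc; exact hc)
        | none, some b => exact absurd h (by intro hc; exact hc)⟩
  left_inv f := by
    apply Subtype.ext
    funext o
    match o with
    | none => exact (top_eq_last f.1 f.2.1 f.2.2).symm
    | some a => exact Fin.ext rfl
  right_inv g := by
    apply Subtype.ext
    funext a
    exact Fin.ext rfl


-- ===== tree structure equivalences =====

instance internal_leaf_empty : IsEmpty (Internal leaf) := by
  constructor
  rintro ⟨p, cs, hp⟩
  match p with
  | [] => simp [subtreeAt] at hp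
  | i :: q => simp [subtreeAt] at hp

lemma cons_internal {cs : List RTree} {i : ℕ} {q : List ℕ}
    (hp : ∃ ds, subtreeAt (i :: q) (node cs) = some (node ds)) :
    ∃ (h : i < cs.length), ∃ ds, subtreeAt q (cs.get ⟨i, h⟩) = some (node ds) := by
  obtain ⟨ds, hds⟩ := hp
  rw [show subtreeAt (i :: q) (node cs) = (cs[i]?).bind (subtreeAt q) from rfl,
    Option.bind_eq_some_iff] at hds
  obtain ⟨c, hc, hq⟩ := hds
  rw [List.getElem?_eq_some_iff] at hc
  obtain ⟨h, rfl⟩ := hc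
  exact ⟨h, ds, hq⟩

lemma internal_cons {cs : List RTree} (i : Fin cs.length) {q : List ℕ}
    (hq : ∃ ds, subtreeAt q (cs.get i) = some (node ds)) :
    ∃ ds, subtreeAt (i.1 :: q) (node cs) = some (node ds) := by
  obtain ⟨ds, hds⟩ := hq
  refine ⟨ds, ?_⟩
  show (cs[i.1]?).bind (subtreeAt q) = _
  rw [List.getElem?_eq_getElem i.2, Option.bind_some]
  exact hds

/-- the type of internal nodes of the forest `cs`. -/
def SInt (cs : List RTree) : Type := Σ i : Fin cs.length, Internal (cs.get i)

/-- ancestor relation on forest internal nodes. -/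
def RS (cs : List RTree) (x y : SInt cs) : Prop := (x.1 : ℕ) = (y.1 : ℕ) ∧ RP x.2.1 y.2.1

def eNode (cs : List RTree) : Internal (node cs) ≃ Option (SInt cs) where
  toFun u :=
    match u with
    | ⟨[], _⟩ => none
    | ⟨i :: q, hp⟩ =>
        some ⟨⟨i, (cons_internal hp).choose⟩, ⟨q, (cons_internal hp).choose_spec⟩⟩
  invFun o :=
    match o with
    | none => ⟨[], cs, rfl⟩
    | some ⟨i, ⟨q, hq⟩⟩ => ⟨i.1 :: q, internal_cons i hq⟩
  left_inv u := by
    match u with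
    | ⟨[], _⟩ => rfl
    | ⟨i :: q, hp⟩ => rfl
  right_inv o := by
    match o with
    | none => rfl
    | some ⟨i, ⟨q, hq⟩⟩ => rfl

lemma eNode_rel (cs : List RTree) (u v : Internal (node cs)) :
    RI (node cs) u v ↔ ROpt (RS cs) (eNode cs u) (eNode cs v) := by
  rcases u with ⟨_ | ⟨i, qu⟩, hu⟩ <;> rcases v with ⟨_ | ⟨j, qv⟩, hv⟩
  · exact ⟨fun h => absurd rfl h.2, fun h => h.elim⟩
  · exact ⟨fun h => absurd (List.prefix_nil.mp h.1) (List.cons_ne_nil j qv),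
      fun h => h.elim⟩
  · refine ⟨fun _ => trivial, fun _ => ⟨List.nil_prefix, ?_⟩⟩
    intro h
    exact List.cons_ne_nil i qu h.symm
  · show RP (i :: qu) (j :: qv) ↔ ((i : ℕ) = (j : ℕ) ∧ RP qu qv)
    constructor
    · rintro ⟨hpre, hne⟩
      rw [List.cons_prefix_cons] at hpre
      exact ⟨hpre.1.symm, hpre.2, fun h => hne (by rw [hpre.1, h])⟩
    · rintro ⟨hij, hpre, hne⟩
      refine ⟨List.cons_prefix_cons.mpr ⟨hij.symm, hpre⟩, fun h => hne ?_⟩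
      exact ((List.cons.injEq _ _ _ _).mp h.symm).2.symm

def eCons (c : RTree) (cs : List RTree) : SInt (c :: cs) ≃ (Internal c ⊕ SInt cs) where
  toFun x :=
    match x with
    | ⟨⟨0, _⟩, u⟩ => Sum.inl u
    | ⟨⟨i+1, h⟩, u⟩ => Sum.inr ⟨⟨i, Nat.lt_of_succ_lt_succ h⟩, u⟩
  invFun y :=
    match y with
    | Sum.inl u => ⟨⟨0, Nat.succ_pos _⟩, u⟩
    | Sum.inr ⟨i, u⟩ => ⟨⟨i.1 + 1, Nat.succ_lt_succ i.2⟩, u⟩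
  left_inv x := by
    match x with
    | ⟨⟨0, _⟩, u⟩ => rfl
    | ⟨⟨i+1, h⟩, u⟩ => rfl
  right_inv y := by
    match y with
    | Sum.inl u => rfl
    | Sum.inr ⟨i, u⟩ => rfl

lemma eCons_rel (c : RTree) (cs : List RTree) (x y : SInt (c :: cs)) :
    RS (c :: cs) x y ↔ RSum (RI c) (RS cs) (eCons c cs x) (eCons c cs y) := by
  match x, y with
  | ⟨⟨0, _⟩, u⟩, ⟨⟨0, _⟩, v⟩ =>
      show ((0 : ℕ) = 0 ∧ RP u.1 v.1) ↔ RP u.1 v.1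
      simp
  | ⟨⟨0, _⟩, u⟩, ⟨⟨j+1, _⟩, v⟩ =>
      show ((0 : ℕ) = j + 1 ∧ RP u.1 v.1) ↔ False
      simp
  | ⟨⟨i+1, _⟩, u⟩, ⟨⟨0, _⟩, v⟩ =>
      show ((i + 1 : ℕ) = 0 ∧ RP u.1 v.1) ↔ False
      simp
  | ⟨⟨i+1, _⟩, u⟩, ⟨⟨j+1, _⟩, v⟩ =>
      show ((i + 1 : ℕ) = j + 1 ∧ RP u.1 v.1) ↔ ((i : ℕ) = j ∧ RP u.1 v.1)
      simp


-- ===== shuffle lemma =====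

section Shuffle

variable {A B : Type*} [Fintype A] [Fintype B] {RA : A → A → Prop} {RB : B → B → Prop}
variable {a b : ℕ}

lemma orderIsoOfFin_symm_congr {n k : ℕ} {S T : Finset (Fin n)} (h : S = T) (hS : S.card = k)
    (hT : T.card = k) {z : Fin n} (hzS : z ∈ S) (hzT : z ∈ T) :
    (S.orderIsoOfFin hS).symm ⟨z, hzS⟩ = (T.orderIsoOfFin hT).symm ⟨z, hzT⟩ := by
  subst h
  rfl

def shuffleEquiv (ha : Fintype.card A = a) (hb : Fintype.card B = b) :
    LH (A ⊕ B) (RSum RA RB) (Fin (a + b)) ≃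
      ({S : Finset (Fin (a + b)) // S.card = a} × LH A RA (Fin a) × LH B RB (Fin b)) where
  toFun f := by
    obtain ⟨f, hbij, hcond⟩ := f
    have hinjA : Function.Injective (fun x : A => f (Sum.inl x)) := by
      intro x y h
      have := hbij.1 h
      exact Sum.inl.injEq _ _ |>.mp this
    have hinjB : Function.Injective (fun y : B => f (Sum.inr y)) := by
      intro x y h
      have := hbij.1 h
      exact Sum.inr.injEq _ _ |>.mp this
    set S : Finset (Fin (a + b)) := Finset.image (fun x : A => f (Sum.inl x)) Finset.univ with hSdef
    have hS : S.card = a := by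
      rw [hSdef, Finset.card_image_of_injective _ hinjA, Finset.card_univ, ha]
    have hSc : Sᶜ.card = b := by
      rw [Finset.card_compl, hS, Fintype.card_fin]
      omega
    have hmemA : ∀ x : A, f (Sum.inl x) ∈ S := by
      intro x
      rw [hSdef]
      exact Finset.mem_image_of_mem _ (Finset.mem_univ x)
    have hmemB : ∀ y : B, f (Sum.inr y) ∈ Sᶜ := by
      intro y
      rw [Finset.mem_compl, hSdef]
      intro hmem2
      obtain ⟨x, _, hx⟩ := Finset.mem_image.mp hmem2
      exact absurd (hbij.1 hx) (by simp)
    refine ⟨⟨S, hS⟩, ⟨fun x => (S.orderIsoOfFin hS).symm ⟨f (Sum.inl x), hmemA x⟩, ⟨?_, ?_⟩, ?_⟩,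
      ⟨fun y => (Sᶜ.orderIsoOfFin hSc).symm ⟨f (Sum.inr y), hmemB y⟩, ⟨?_, ?_⟩, ?_⟩⟩
    · intro x y h
      have h2 := (S.orderIsoOfFin hS).symm.injective h
      have h3 : f (Sum.inl x) = f (Sum.inl y) := congrArg Subtype.val h2
      exact hinjA h3
    · intro z
      have hmem : ((S.orderIsoOfFin hS) z : Fin (a + b)) ∈
          Finset.image (fun x : A => f (Sum.inl x)) Finset.univ := ((S.orderIsoOfFin hS) z).2
      obtain ⟨x, _, hx⟩ := Finset.mem_image.mp hmem
      refine ⟨x, ?_⟩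
      have h4 : (⟨f (Sum.inl x), hmemA x⟩ : {u // u ∈ S}) = (S.orderIsoOfFin hS) z :=
        Subtype.ext hx
      show (S.orderIsoOfFin hS).symm ⟨f (Sum.inl x), hmemA x⟩ = z
      rw [h4]
      exact OrderIso.symm_apply_apply _ _
    · intro u v h
      have h2 := hcond (Sum.inl u) (Sum.inl v) h
      show (S.orderIsoOfFin hS).symm ⟨f (Sum.inl u), hmemA u⟩ <
        (S.orderIsoOfFin hS).symm ⟨f (Sum.inl v), hmemA v⟩
      exact (S.orderIsoOfFin hS).symm.lt_iff_lt.mpr (Subtype.mk_lt_mk.mpr h2)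
    · intro x y h
      have h2 := (Sᶜ.orderIsoOfFin hSc).symm.injective h
      have h3 : f (Sum.inr x) = f (Sum.inr y) := congrArg Subtype.val h2
      exact hinjB h3
    · intro z
      have hmem : ((Sᶜ.orderIsoOfFin hSc) z : Fin (a + b)) ∉
          Finset.image (fun x : A => f (Sum.inl x)) Finset.univ :=
        Finset.mem_compl.mp ((Sᶜ.orderIsoOfFin hSc) z).2
      obtain ⟨x, hx⟩ := hbij.2 ((Sᶜ.orderIsoOfFin hSc) z : Fin (a + b))
      match x, hx with
      | Sum.inl x, hx =>
          exfalso
          exact hmem (hx ▸ Finset.mem_image_of_mem _ (Finset.mem_univ x))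
      | Sum.inr y, hx =>
          refine ⟨y, ?_⟩
          have h4 : (⟨f (Sum.inr y), hmemB y⟩ : {u // u ∈ Sᶜ}) = (Sᶜ.orderIsoOfFin hSc) z :=
            Subtype.ext hx
          show (Sᶜ.orderIsoOfFin hSc).symm ⟨f (Sum.inr y), hmemB y⟩ = z
          rw [h4]
          exact OrderIso.symm_apply_apply _ _
    · intro u v h
      have h2 := hcond (Sum.inr u) (Sum.inr v) h
      show (Sᶜ.orderIsoOfFin hSc).symm ⟨f (Sum.inr u), hmemB u⟩ <
        (Sᶜ.orderIsoOfFin hSc).symm ⟨f (Sum.inr v), hmemB v⟩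
      exact (Sᶜ.orderIsoOfFin hSc).symm.lt_iff_lt.mpr (Subtype.mk_lt_mk.mpr h2)
  invFun t := by
    obtain ⟨⟨S, hS⟩, ⟨gA, hAbij, hAcond⟩, ⟨gB, hBbij, hBcond⟩⟩ := t
    have hSc : Sᶜ.card = b := by
      rw [Finset.card_compl, hS, Fintype.card_fin]
      omega
    refine ⟨Sum.elim (fun x => ((S.orderIsoOfFin hS) (gA x) : Fin (a + b)))
      (fun y => ((Sᶜ.orderIsoOfFin hSc) (gB y) : Fin (a + b))), ⟨?_, ?_⟩, ?_⟩
    · intro x y h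
      match x, y with
      | Sum.inl x, Sum.inl y =>
          have h2 : (S.orderIsoOfFin hS) (gA x) = (S.orderIsoOfFin hS) (gA y) := Subtype.ext h
          exact congrArg Sum.inl (hAbij.1 ((S.orderIsoOfFin hS).injective h2))
      | Sum.inl x, Sum.inr y =>
          exfalso
          have hm1 : ((S.orderIsoOfFin hS) (gA x) : Fin (a + b)) ∈ S := ((S.orderIsoOfFin hS) (gA x)).2
          have hm2 : ((Sᶜ.orderIsoOfFin hSc) (gB y) : Fin (a + b)) ∈ Sᶜ := ((Sᶜ.orderIsoOfFin hSc) (gB y)).2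
          rw [Finset.mem_compl] at hm2
          have h' : ((S.orderIsoOfFin hS) (gA x) : Fin (a + b)) =
            ((Sᶜ.orderIsoOfFin hSc) (gB y) : Fin (a + b)) := h
          exact hm2 (h' ▸ hm1)
      | Sum.inr x, Sum.inl y =>
          exfalso
          have hm1 : ((S.orderIsoOfFin hS) (gA y) : Fin (a + b)) ∈ S := ((S.orderIsoOfFin hS) (gA y)).2
          have hm2 : ((Sᶜ.orderIsoOfFin hSc) (gB x) : Fin (a + b)) ∈ Sᶜ := ((Sᶜ.orderIsoOfFin hSc) (gB x)).2
          rw [Finset.mem_compl] at hm2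
          have h' : ((Sᶜ.orderIsoOfFin hSc) (gB x) : Fin (a + b)) =
            ((S.orderIsoOfFin hS) (gA y) : Fin (a + b)) := h
          exact hm2 (h'.symm ▸ hm1)
      | Sum.inr x, Sum.inr y =>
          have h2 : (Sᶜ.orderIsoOfFin hSc) (gB x) = (Sᶜ.orderIsoOfFin hSc) (gB y) := Subtype.ext h
          exact congrArg Sum.inr (hBbij.1 ((Sᶜ.orderIsoOfFin hSc).injective h2))
    · intro z
      by_cases hz : z ∈ S
      · obtain ⟨i, hi⟩ := hAbij.2 ((S.orderIsoOfFin hS).symm ⟨z, hz⟩)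
        refine ⟨Sum.inl i, ?_⟩
        show ((S.orderIsoOfFin hS) (gA i) : Fin (a + b)) = z
        rw [hi, OrderIso.apply_symm_apply]
      · obtain ⟨i, hi⟩ := hBbij.2 ((Sᶜ.orderIsoOfFin hSc).symm ⟨z, Finset.mem_compl.mpr hz⟩)
        refine ⟨Sum.inr i, ?_⟩
        show ((Sᶜ.orderIsoOfFin hSc) (gB i) : Fin (a + b)) = z
        rw [hi, OrderIso.apply_symm_apply]
    · intro u v h
      match u, v with
      | Sum.inl x, Sum.inl y =>
          have h2 := hAcond x y h
          show ((S.orderIsoOfFin hS) (gA x) : Fin (a + b)) < ((S.orderIsoOfFin hS) (gA y) : Fin (a + b))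
          exact Subtype.coe_lt_coe.mpr ((S.orderIsoOfFin hS).lt_iff_lt.mpr h2)
      | Sum.inr x, Sum.inr y =>
          have h2 := hBcond x y h
          show ((Sᶜ.orderIsoOfFin hSc) (gB x) : Fin (a + b)) < ((Sᶜ.orderIsoOfFin hSc) (gB y) : Fin (a + b))
          exact Subtype.coe_lt_coe.mpr ((Sᶜ.orderIsoOfFin hSc).lt_iff_lt.mpr h2)
      | Sum.inl x, Sum.inr y => exact absurd h (fun hc => hc)
      | Sum.inr x, Sum.inl y => exact absurd h (fun hc => hc)
  left_inv f := by
    obtain ⟨f, hbij, hcond⟩ := f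
    apply Subtype.ext
    funext z
    rcases z with x | y
    · exact congrArg Subtype.val (OrderIso.apply_symm_apply _ _)
    · exact congrArg Subtype.val (OrderIso.apply_symm_apply _ _)
  right_inv t := by
    obtain ⟨⟨S, hS⟩, ⟨gA, hAbij, hAcond⟩, ⟨gB, hBbij, hBcond⟩⟩ := t
    have hSc : Sᶜ.card = b := by
      rw [Finset.card_compl, hS, Fintype.card_fin]
      omega
    set F : A ⊕ B → Fin (a + b) := Sum.elim (fun x => ((S.orderIsoOfFin hS) (gA x) : Fin (a + b)))
      (fun y => ((Sᶜ.orderIsoOfFin hSc) (gB y) : Fin (a + b))) with hF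
    have himg : Finset.image (fun x : A => F (Sum.inl x)) Finset.univ = S := by
      ext z
      simp only [Finset.mem_image, Finset.mem_univ, true_and]
      constructor
      · rintro ⟨x, rfl⟩
        exact ((S.orderIsoOfFin hS) (gA x)).2
      · intro hz
        obtain ⟨i, hi⟩ := hAbij.2 ((S.orderIsoOfFin hS).symm ⟨z, hz⟩)
        refine ⟨i, ?_⟩
        show ((S.orderIsoOfFin hS) (gA i) : Fin (a + b)) = z
        rw [hi, OrderIso.apply_symm_apply]
    have himgc : (Finset.image (fun x : A => F (Sum.inl x)) Finset.univ)ᶜ = Sᶜ := by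
      rw [himg]
    refine Prod.ext ?_ (Prod.ext ?_ ?_)
    · exact Subtype.ext himg
    · apply Subtype.ext
      funext x
      exact (orderIsoOfFin_symm_congr himg _ hS _ ((S.orderIsoOfFin hS) (gA x)).2).trans
        ((S.orderIsoOfFin hS).symm_apply_apply (gA x))
    · apply Subtype.ext
      funext y
      exact (orderIsoOfFin_symm_congr himgc _ hSc _ ((Sᶜ.orderIsoOfFin hSc) (gB y)).2).trans
        ((Sᶜ.orderIsoOfFin hSc).symm_apply_apply (gB y))

end Shuffle

-- ===== unfolding lemmas =====

lemma wcount_leaf : wcount leaf = 0 := by rw [wcount]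

lemma wcount_node (cs : List RTree) : wcount (node cs) = (cs.map wcount).sum + 1 := by
  rw [wcount, List.attach_map_val]
  omega

lemma prodW_leaf : prodW leaf = 1 := by rw [prodW]

lemma prodW_node (cs : List RTree) :
    prodW (node cs) = ((cs.map wcount).sum + 1) * (cs.map prodW).prod := by
  rw [prodW, List.attach_map_val, List.attach_map_val, Nat.add_comm 1]

lemma leaves_leaf : leaves leaf = 1 := by rw [leaves]

lemma leaves_node (cs : List RTree) : leaves (node cs) = (cs.map leaves).sum := by
  rw [leaves, List.attach_map_val]

-- ===== counting =====

lemma shuffle_card {A B : Type*} [Fintype A] [Fintype B] {RA : A → A → Prop}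
    {RB : B → B → Prop} {a b : ℕ} (ha : Fintype.card A = a) (hb : Fintype.card B = b) :
    Nat.card (LH (A ⊕ B) (RSum RA RB) (Fin (a + b))) =
      (a + b).choose a * (Nat.card (LH A RA (Fin a)) * Nat.card (LH B RB (Fin b))) := by
  rw [Nat.card_congr (shuffleEquiv ha hb), Nat.card_prod, Nat.card_prod]
  congr 1
  rw [Nat.card_eq_fintype_card, Fintype.card_finset_len, Fintype.card_fin]

lemma card_LH_of_isEmpty {A : Type*} [IsEmpty A] {R : A → A → Prop} :
    Nat.card (LH A R (Fin 0)) = 1 := by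
  rw [Nat.card_eq_one_iff_unique]
  constructor
  · constructor
    intro f g
    apply Subtype.ext
    funext x
    exact isEmptyElim x
  · exact ⟨⟨fun x => isEmptyElim x, ⟨fun x => isEmptyElim x, fun y => isEmptyElim y⟩,
      fun u v _ => isEmptyElim u⟩⟩

lemma strongInd (motive : RTree → Prop)
    (ind : ∀ t, (∀ s, sizeOf s < sizeOf t → motive s) → motive t) : ∀ t, motive t := by
  have key : ∀ n t, sizeOf t < n → motive t := by
    intro n
    induction n with
    | zero => intro t h; omega
    | succ n IH => exact fun t h => ind t (fun s hs => IH s (by omega))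
  exact fun t => key (sizeOf t + 1) t (by omega)

lemma sizeOf_lt_of_mem_node {c : RTree} {cs : List RTree} (h : c ∈ cs) :
    sizeOf c < sizeOf (node cs) := by
  have := List.sizeOf_lt_of_mem h
  simp only [node.sizeOf_spec]
  omega

lemma finite_card_forest (ds : List RTree)
    (h : ∀ c ∈ ds, Finite (Internal c) ∧ Nat.card (Internal c) = wcount c) :
    Finite (SInt ds) ∧ Nat.card (SInt ds) = (ds.map wcount).sum := by
  induction ds with
  | nil =>
      haveI he : IsEmpty (SInt []) := ⟨fun x => Fin.elim0 x.1⟩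
      exact ⟨Finite.of_subsingleton, by rw [Nat.card_of_isEmpty]; rfl⟩
  | cons c ds IH =>
      obtain ⟨h1, h2⟩ := h c List.mem_cons_self
      obtain ⟨h3, h4⟩ := IH (fun d hd => h d (List.mem_cons_of_mem _ hd))
      have hfin : Finite (SInt (c :: ds)) := Finite.of_equiv _ (eCons c ds).symm
      refine ⟨hfin, ?_⟩
      rw [Nat.card_congr (eCons c ds), Nat.card_sum, h2, h4]
      rfl

lemma finite_card_internal : ∀ T : RTree, Finite (Internal T) ∧ Nat.card (Internal T) = wcount T := by
  apply strongInd
  intro T IH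
  match T with
  | leaf =>
      refine ⟨Finite.of_subsingleton, ?_⟩
      rw [Nat.card_of_isEmpty, wcount_leaf]
  | node cs =>
      obtain ⟨hfin, hcard⟩ := finite_card_forest cs
        (fun c hc => IH c (sizeOf_lt_of_mem_node hc))
      haveI := hfin
      haveI : Finite (Option (SInt cs)) := Finite.of_equiv _ (Equiv.optionEquivSumPUnit.{0,0} _).symm
      have hfin2 : Finite (Internal (node cs)) := Finite.of_equiv _ (eNode cs).symm
      refine ⟨hfin2, ?_⟩
      rw [Nat.card_congr (eNode cs), Nat.card_congr (Equiv.optionEquivSumPUnit.{0,0} _),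
        Nat.card_sum, hcard, Nat.card_unique, wcount_node]

instance internal_finite (T : RTree) : Finite (Internal T) := (finite_card_internal T).1

lemma card_internal (T : RTree) : Nat.card (Internal T) = wcount T := (finite_card_internal T).2

noncomputable def NN (T : RTree) : ℕ := Nat.card (LH (Internal T) (RI T) (Fin (wcount T)))

noncomputable def FN (ds : List RTree) : ℕ :=
  Nat.card (LH (SInt ds) (RS ds) (Fin ((ds.map wcount).sum)))

lemma forest_key (ds : List RTree)
    (h : ∀ c ∈ ds, NN c * prodW c = (wcount c).factorial) :
    FN ds * (ds.map prodW).prod = ((ds.map wcount).sum).factorial := by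
  induction ds with
  | nil =>
      haveI he : IsEmpty (SInt []) := ⟨fun x => Fin.elim0 x.1⟩
      show FN [] * 1 = Nat.factorial 0
      rw [mul_one]
      exact card_LH_of_isEmpty
  | cons c ds IH =>
      rw [List.map_cons, List.map_cons, List.sum_cons, List.prod_cons]
      have hc := h c List.mem_cons_self
      have IH2 := IH (fun d hd => h d (List.mem_cons_of_mem _ hd))
      haveI : Finite (SInt ds) := (finite_card_forest ds
        (fun d _ => ⟨internal_finite d, card_internal d⟩)).1
      haveI finA : Fintype (Internal c) := Fintype.ofFinite _
      haveI finB : Fintype (SInt ds) := Fintype.ofFinite _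
      have hcA : Fintype.card (Internal c) = wcount c := by
        rw [← Nat.card_eq_fintype_card, card_internal]
      have hcB : Fintype.card (SInt ds) = (ds.map wcount).sum := by
        rw [← Nat.card_eq_fintype_card, (finite_card_forest ds
          (fun d _ => ⟨internal_finite d, card_internal d⟩)).2]
      have step1 : FN (c :: ds) =
          Nat.card (LH (Internal c ⊕ SInt ds) (RSum (RI c) (RS ds))
            (Fin (wcount c + (ds.map wcount).sum))) := by
        apply Nat.card_congr
        exact LH.congrSource (eCons c ds) (eCons_rel c ds)
      rw [step1, shuffle_card hcA hcB]
      set w1 := wcount c with hw1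
      set ws := (ds.map wcount).sum with hws
      rw [show Nat.card (LH (Internal c) (RI c) (Fin w1)) = NN c from rfl,
        show Nat.card (LH (SInt ds) (RS ds) (Fin ws)) = FN ds from rfl]
      rw [show (w1 + ws).choose w1 * (NN c * FN ds) * (prodW c * (ds.map prodW).prod)
          = (w1 + ws).choose w1 * ((NN c * prodW c) * (FN ds * (ds.map prodW).prod)) from by ring]
      rw [hc, IH2]
      rw [show (w1 + ws).choose w1 * (w1.factorial * ws.factorial)
          = (w1 + ws).choose w1 * w1.factorial * (w1 + ws - w1).factorial from by
        rw [Nat.add_sub_cancel_left]; ring]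
      rw [Nat.choose_mul_factorial_mul_factorial (Nat.le_add_right w1 ws)]

lemma key : ∀ T : RTree, NN T * prodW T = (wcount T).factorial := by
  apply strongInd
  intro T IH
  match T with
  | leaf =>
      have hNN : NN leaf = 1 := by
        unfold NN
        rw [show wcount leaf = 0 from wcount_leaf]
        exact card_LH_of_isEmpty
      rw [hNN, prodW_leaf, wcount_leaf]
      rfl
  | node cs =>
      have hw : wcount (node cs) = (cs.map wcount).sum + 1 := wcount_node cs
      have hNN : NN (node cs) = FN cs := by
        show Nat.card _ = Nat.card _
        apply Nat.card_congr
        refine ((LH.congrSource (eNode cs) (eNode_rel cs)).trans ?_).trans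
          (LH.optionEquiv ((cs.map wcount).sum))
        exact LH.congrTarget _ (Fin.castOrderIso hw)
      have hforest := forest_key cs (fun c hc => IH c (sizeOf_lt_of_mem_node hc))
      rw [hNN, prodW_node, hw]
      rw [show FN cs * (((cs.map wcount).sum + 1) * (cs.map prodW).prod)
        = ((cs.map wcount).sum + 1) * (FN cs * (cs.map prodW).prod) from by ring, hforest]
      rw [Nat.factorial_succ]

-- ===== r-furcating facts =====

lemma prodMr_leaf (r : ℕ) : prodMr r leaf = 1 := by rw [prodMr]

lemma prodMr_node (r : ℕ) (cs : List RTree) :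
    prodMr r (node cs) = ((leaves (node cs) - 1) / (r - 1)) * (cs.map (prodMr r)).prod := by
  rw [prodMr, List.attach_map_val]

lemma sum_map_affine (k : ℕ) (l : List RTree) (f : RTree → ℕ) :
    (l.map (fun c => k * f c + 1)).sum = k * (l.map f).sum + l.length := by
  induction l with
  | nil => simp
  | cons c l IH =>
      simp only [List.map_cons, List.sum_cons, List.length_cons, IH, Nat.mul_add]
      ring

lemma furc_facts (r : ℕ) (hr : 2 ≤ r) : ∀ T : RTree,
    (∀ p cs, subtreeAt p T = some (node cs) → cs.length = r) →
    (leaves T = (r - 1) * wcount T + 1 ∧ prodMr r T = prodW T) := by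
  apply strongInd
  intro T IH
  match T with
  | leaf =>
      intro _
      rw [leaves_leaf, wcount_leaf, prodMr_leaf, prodW_leaf]
      omega
  | node cs =>
      intro hfurc
      have hlen : cs.length = r := hfurc [] cs rfl
      have hchild : ∀ c ∈ cs, leaves c = (r - 1) * wcount c + 1 ∧ prodMr r c = prodW c := by
        intro c hcmem
        obtain ⟨i, hi⟩ := List.get_of_mem hcmem
        apply IH c (sizeOf_lt_of_mem_node hcmem)
        intro p ds hp
        apply hfurc (i.1 :: p) ds
        show (cs[i.1]?).bind (subtreeAt p) = _
        rw [List.getElem?_eq_getElem i.2, Option.bind_some]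
        rw [show cs[i.1] = c from hi]
        exact hp
      have hsum : (cs.map leaves).sum = (r - 1) * (cs.map wcount).sum + cs.length := by
        rw [List.map_congr_left (fun c hc => (hchild c hc).1), sum_map_affine]
      have hL : leaves (node cs) = (r - 1) * wcount (node cs) + 1 := by
        rw [leaves_node, wcount_node, hsum, hlen, Nat.mul_succ]
        omega
      refine ⟨hL, ?_⟩
      rw [prodMr_node, prodW_node]
      congr 1
      · rw [hL, wcount_node, Nat.add_sub_cancel,
          Nat.mul_div_cancel_left _ (show 0 < r - 1 by omega)]
      · rw [List.map_congr_left (fun c hc => (hchild c hc).2)]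

/-- for a strictly `r`-furcating tree `T` with `n` leaves, the number
of labeled histories equals `((n-1)/(r-1))! / ∏_{v internal} (m(v)-1)/(r-1)`. -/
theorem N_of_strictly_rfurcating (r : ℕ) (T : RTree) (hr : 2 ≤ r)
    (hfurc : ∀ (p : List ℕ) (cs : List RTree),
      subtreeAt p T = some (node cs) → cs.length = r) :
    N T = Nat.factorial ((leaves T - 1) / (r - 1)) / prodMr r T := by
  have hN : N T = NN T := by
    apply Nat.card_congr
    apply Equiv.subtypeEquivRight
    intro f
    constructor
    · rintro ⟨h1, h2⟩
      exact ⟨h1, fun u v hrel => h2 u v hrel.1 hrel.2⟩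
    · rintro ⟨h1, h2⟩
      exact ⟨h1, fun u v hp hne => h2 u v ⟨hp, hne⟩⟩
  have hkey := key T
  obtain ⟨hL, hP⟩ := furc_facts r hr T hfurc
  have hw : (leaves T - 1) / (r - 1) = wcount T := by
    rw [hL, Nat.add_sub_cancel, Nat.mul_div_cancel_left _ (show 0 < r - 1 by omega)]
  have hps : prodW T ≠ 0 := by
    intro h0
    rw [h0, Nat.mul_zero] at hkey
    have := Nat.factorial_pos (wcount T)
    omega
  rw [hN, hw, hP]
  exact (Nat.div_eq_of_eq_mul_left (Nat.pos_of_ne_zero hps) hkey.symm).symm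


end RTree
end

section
/- For n ≥ 2, S_r(n) ≥ A_r(n), where A_r(1) = S_r(1) = 1, A_r(n) = Σ_{i=2}^{min(n,r)} C(n,i) A_r(n+1-i), and S_r(n) = Σ over tuples (x₂,...,x_r) with 2 ≤ Σ j·x_j ≤ n of [n! / (∏_j (j!)^{x_j} x_j! · (n - Σ j x_j)!)] · S_r(n - Σ (j-1)x_j). -/
/-- `A r n`: total number of labeled histories (no simultaneity) across all
at-most-`r`-furcating labeled topologies with `n` leaves:
`A r 1 = 1` and `A r n = ∑_{i=2}^{min n r} C(n,i) * A r (n+1-i)` for `n ≥ 2`. -/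
def A (r : ℕ) : ℕ → ℕ
  | 0 => 1
  | 1 => 1
  | n + 2 =>
      ∑ i ∈ (Finset.Icc 2 (min (n + 2) r)).attach,
        Nat.choose (n + 2) i.1 * A r (n + 2 + 1 - i.1)
decreasing_by have := i.2; rw [Finset.mem_Icc] at this; omega

/-- `S r n`: total number of tie-permitting labeled histories across all
at-most-`r`-furcating labeled topologies with `n` leaves: `S r 1 = 1` and for `n ≥ 2`,
`S r n` sums, over tuples `(x₂,…,x_r)` with `2 ≤ ∑ j x_j ≤ n`, the term
`n! / (∏_j (j!)^{x_j} x_j! ⬝ (n - ∑ j x_j)!) ⬝ S r (n - ∑ (j-1) x_j)`.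
Tuples are encoded as functions `x : Fin (r+1) → ℕ` with `x j = 0` for `j < 2`. -/
def S (r : ℕ) : ℕ → ℕ
  | 0 => 1
  | 1 => 1
  | n + 2 =>
      ∑ x ∈ ((Fintype.piFinset
            (fun j : Fin (r + 1) =>
              if 2 ≤ (j : ℕ) then Finset.range (n + 3) else {0})).filter
          (fun x => 2 ≤ ∑ j : Fin (r + 1), (j : ℕ) * x j ∧ ∑ j : Fin (r + 1), (j : ℕ) * x j ≤ n + 2)).attach,
        Nat.factorial (n + 2) /
            ((∏ j : Fin (r + 1), Nat.factorial (j : ℕ) ^ x.1 j * Nat.factorial (x.1 j)) *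
              Nat.factorial (n + 2 - ∑ j : Fin (r + 1), (j : ℕ) * x.1 j))
          * S r (n + 2 - ∑ j : Fin (r + 1), ((j : ℕ) - 1) * x.1 j)
decreasing_by
  have hx := x.2
  rw [Finset.mem_filter, Fintype.mem_piFinset] at hx
  obtain ⟨hpi, h2, hle⟩ := hx
  have key : 1 ≤ ∑ j : Fin (r + 1), ((j : ℕ) - 1) * x.1 j := by
    rcases Nat.eq_zero_or_pos (∑ j : Fin (r + 1), ((j : ℕ) - 1) * x.1 j) with h0 | h1
    · exfalso
      have hz := Finset.sum_eq_zero_iff.mp h0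
      have hall : ∀ j : Fin (r + 1), (j : ℕ) * x.1 j = 0 := by
        intro j
        by_cases hj : 2 ≤ (j : ℕ)
        · have hj0 := hz j (Finset.mem_univ j)
          have hxj : x.1 j = 0 := by
            rcases Nat.mul_eq_zero.mp hj0 with h | h
            · omega
            · exact h
          simp [hxj]
        · have hmem := hpi j
          rw [dif_neg hj] at hmem
          rw [Finset.mem_singleton] at hmem
          simp [hmem]
      have hs : (∑ j : Fin (r + 1), (j : ℕ) * x.1 j) = 0 :=
        Finset.sum_eq_zero (fun j _ => hall j)
      omega
    · exact h1
  omega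

lemma key_aux (r : ℕ) (hr : 2 ≤ r) : ∀ n, A r n ≤ S r n := by
  intro n
  induction n using Nat.strong_induction_on with
  | _ n ih =>
    match n with
    | 0 => simp [A, S]
    | 1 => simp [A, S]
    | n + 2 =>
      rw [A, S, Finset.sum_attach _ (fun i => Nat.choose (n + 2) i * A r (n + 2 + 1 - i)),
        Finset.sum_attach _ (fun x : Fin (r+1) → ℕ =>
          Nat.factorial (n + 2) /
            ((∏ j : Fin (r + 1), Nat.factorial (j : ℕ) ^ x j * Nat.factorial (x j)) *
              Nat.factorial (n + 2 - ∑ j : Fin (r + 1), (j : ℕ) * x j))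
          * S r (n + 2 - ∑ j : Fin (r + 1), ((j : ℕ) - 1) * x j))]
      set φ : ℕ → (Fin (r+1) → ℕ) := fun i j => if (j : ℕ) = i then 1 else 0 with hφ
      have hsum1 : ∀ i, i ≤ r → ∑ j : Fin (r + 1), (j : ℕ) * φ i j = i := by
        intro i hi
        have : ∀ j : Fin (r+1), (j : ℕ) * φ i j = if j = (⟨i, by omega⟩ : Fin (r+1)) then i else 0 := by
          intro j
          simp only [hφ, Fin.ext_iff, mul_ite, mul_one, mul_zero]
          split <;> simp_all
        rw [Finset.sum_congr rfl (fun j _ => this j), Finset.sum_ite_eq']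
        simp
      have hsum2 : ∀ i, i ≤ r → ∑ j : Fin (r + 1), ((j : ℕ) - 1) * φ i j = i - 1 := by
        intro i hi
        have : ∀ j : Fin (r+1), ((j : ℕ) - 1) * φ i j = if j = (⟨i, by omega⟩ : Fin (r+1)) then i - 1 else 0 := by
          intro j
          simp only [hφ, Fin.ext_iff, mul_ite, mul_one, mul_zero]
          split <;> simp_all
        rw [Finset.sum_congr rfl (fun j _ => this j), Finset.sum_ite_eq']
        simp
      have hprod : ∀ i, i ≤ r → (∏ j : Fin (r + 1), Nat.factorial (j : ℕ) ^ φ i j * Nat.factorial (φ i j)) = Nat.factorial i := by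
        intro i hi
        have : ∀ j : Fin (r+1), Nat.factorial (j : ℕ) ^ φ i j * Nat.factorial (φ i j)
            = if j = (⟨i, by omega⟩ : Fin (r+1)) then Nat.factorial i else 1 := by
          intro j
          simp only [hφ, Fin.ext_iff]
          split <;> simp_all [Nat.factorial]
        rw [Finset.prod_congr rfl (fun j _ => this j), Finset.prod_ite_eq']
        simp
      have hmem : ∀ i ∈ Finset.Icc 2 (min (n+2) r), φ i ∈ (Fintype.piFinset
            (fun j : Fin (r + 1) =>
              if 2 ≤ (j : ℕ) then Finset.range (n + 3) else {0})).filter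
          (fun x => 2 ≤ ∑ j : Fin (r + 1), (j : ℕ) * x j ∧ ∑ j : Fin (r + 1), (j : ℕ) * x j ≤ n + 2) := by
        intro i hi
        rw [Finset.mem_Icc] at hi
        rw [Finset.mem_filter, Fintype.mem_piFinset]
        refine ⟨fun j => ?_, ?_, ?_⟩
        · by_cases hj : 2 ≤ (j : ℕ)
          · rw [if_pos hj]
            simp only [hφ]
            split <;> simp [Finset.mem_range] <;> omega
          · rw [if_neg hj]
            simp only [hφ]
            rw [Finset.mem_singleton]
            split <;> omega
        · rw [hsum1 i (by omega)]; omega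
        · rw [hsum1 i (by omega)]; omega
      have hinj : Set.InjOn φ (Finset.Icc 2 (min (n+2) r)) := by
        intro a ha b hb hab
        rw [Finset.coe_Icc, Set.mem_Icc] at ha hb
        have := congrFun hab (⟨a, by omega⟩ : Fin (r+1))
        simp only [hφ] at this
        split at this <;> split at this <;> simp_all
      calc ∑ i ∈ Finset.Icc 2 (min (n + 2) r), Nat.choose (n + 2) i * A r (n + 2 + 1 - i)
          ≤ ∑ i ∈ Finset.Icc 2 (min (n + 2) r), Nat.choose (n + 2) i * S r (n + 2 + 1 - i) := by
            refine Finset.sum_le_sum fun i hi => ?_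
            rw [Finset.mem_Icc] at hi
            exact Nat.mul_le_mul_left _ (ih _ (by omega))
        _ = ∑ x ∈ (Finset.Icc 2 (min (n + 2) r)).image φ,
              Nat.factorial (n + 2) /
                ((∏ j : Fin (r + 1), Nat.factorial (j : ℕ) ^ x j * Nat.factorial (x j)) *
                  Nat.factorial (n + 2 - ∑ j : Fin (r + 1), (j : ℕ) * x j))
              * S r (n + 2 - ∑ j : Fin (r + 1), ((j : ℕ) - 1) * x j) := by
            rw [Finset.sum_image (fun a ha b hb h => hinj ha hb h)]
            refine Finset.sum_congr rfl fun i hi => ?_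
            rw [Finset.mem_Icc] at hi
            rw [hsum1 i (by omega), hsum2 i (by omega), hprod i (by omega),
              ← Nat.choose_eq_factorial_div_factorial (by omega : i ≤ n + 2)]
            congr 2
            omega
        _ ≤ _ := by
            refine Finset.sum_le_sum_of_subset ?_
            intro x hx
            rw [Finset.mem_image] at hx
            obtain ⟨i, hi, rfl⟩ := hx
            exact hmem i hi


/-- for `r ≥ 2` and `n ≥ 2`, `S_r(n) ≥ A_r(n)`. -/
theorem S_ge_A (r n : ℕ) (hr : 2 ≤ r) (hn : 2 ≤ n) : A r n ≤ S r n :=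
  key_aux r hr n
end
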